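/- With notation as above (X₀ − Y₀ = v₀w₀ᵀ of rank one, P₁ = {Y₀ + x w₀ᵀ}, P₂ = {Y₀ + v₀ yᵀ}), if X ∈ P₁ \ P₂ and Y ∈ P₂ \ P₁, then rank(X − Y) > 1. -/

import Mathlib

open Matrix

/-- Lemma `linalg` (ii): with `X₀ - Y₀ = v₀ w₀ᵀ` of rank one and the planes
`P₁ = {Y₀ + x w₀ᵀ}`, `P₂ = {Y₀ + v₀ yᵀ}`, any `X ∈ P₁ \ P₂` and `Y ∈ P₂ \ P₁`
satisfy `rank (X - Y) > 1`. -/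
theorem stmt9 (m n : ℕ) (X₀ Y₀ : Matrix (Fin m) (Fin n) ℝ)
    (v₀ : Fin m → ℝ) (w₀ : Fin n → ℝ) (hv₀ : v₀ ≠ 0) (hw₀ : w₀ ≠ 0)
    (hfac : X₀ - Y₀ = vecMulVec v₀ w₀) (hrank : (X₀ - Y₀).rank = 1)
    (X Y : Matrix (Fin m) (Fin n) ℝ)
    (hX : X ∈ {A : Matrix (Fin m) (Fin n) ℝ | ∃ x : Fin m → ℝ, A = Y₀ + vecMulVec x w₀} \
            {A : Matrix (Fin m) (Fin n) ℝ | ∃ y : Fin n → ℝ, A = Y₀ + vecMulVec v₀ y})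
    (hY : Y ∈ {A : Matrix (Fin m) (Fin n) ℝ | ∃ y : Fin n → ℝ, A = Y₀ + vecMulVec v₀ y} \
            {A : Matrix (Fin m) (Fin n) ℝ | ∃ x : Fin m → ℝ, A = Y₀ + vecMulVec x w₀}) :
    1 < (X - Y).rank := by
  obtain ⟨⟨x, hXeq⟩, hX2⟩ := hX
  obtain ⟨⟨y, hYeq⟩, hY2⟩ := hY
  -- entries of X - Y
  have hM : ∀ i j, (X - Y) i j = x i * w₀ j - v₀ i * y j := by
    intro i j
    simp [hXeq, hYeq, vecMulVec_apply, Matrix.sub_apply, Matrix.add_apply]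
  -- x is not a multiple of v₀
  have hxv : ∀ c : ℝ, x ≠ c • v₀ := by
    intro c h
    apply hX2
    refine ⟨c • w₀, ?_⟩
    rw [hXeq, h]
    congr 1
    ext i j
    simp [vecMulVec_apply]
    ring
  -- y is not a multiple of w₀
  have hyw : ∀ c : ℝ, y ≠ c • w₀ := by
    intro c h
    apply hY2
    refine ⟨c • v₀, ?_⟩
    rw [hYeq, h]
    congr 1
    ext i j
    simp [vecMulVec_apply]
    ring
  -- x and v₀ are linearly independent
  have hli : ∀ a b : ℝ, a • x + b • v₀ = 0 → a = 0 ∧ b = 0 := by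
    intro a b hab
    by_cases ha : a = 0
    · subst ha
      simp at hab
      rcases hab with hb | hb
      · exact ⟨rfl, hb⟩
      · exact absurd hb hv₀
    · exfalso
      apply hxv (-b / a)
      ext i
      have := congrFun hab i
      simp at this ⊢
      field_simp
      linarith
  -- pick j with w₀ j ≠ 0
  obtain ⟨j, hj⟩ : ∃ j, w₀ j ≠ 0 := by
    by_contra h
    push_neg at h
    exact hw₀ (funext h)
  -- pick k with y k * w₀ j ≠ y j * w₀ k
  obtain ⟨k, hk⟩ : ∃ k, y k * w₀ j ≠ y j * w₀ k := by
    by_contra h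
    push_neg at h
    apply hyw (y j / w₀ j)
    ext l
    have := h l
    simp only [Pi.smul_apply, smul_eq_mul]
    field_simp
    linarith [this]
  -- the two columns
  set cj : Fin m → ℝ := (X - Y)ᵀ j with hcj
  set ck : Fin m → ℝ := (X - Y)ᵀ k with hck
  have hcjv : ∀ i, cj i = w₀ j * x i - y j * v₀ i := by
    intro i; rw [hcj]; simp [Matrix.transpose_apply, hM]; ring
  have hckv : ∀ i, ck i = w₀ k * x i - y k * v₀ i := by
    intro i; rw [hck]; simp [Matrix.transpose_apply, hM]; ring
  have hind : LinearIndependent ℝ ![cj, ck] := by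
    rw [LinearIndependent.pair_iff]
    intro s t hst
    have key : (s * w₀ j + t * w₀ k) • x + (-(s * y j + t * y k)) • v₀ = 0 := by
      ext i
      have := congrFun hst i
      simp [hcjv, hckv] at this
      simp
      linarith
    obtain ⟨h1, h2⟩ := hli _ _ key
    have h2' : s * y j + t * y k = 0 := by linarith
    have ht : t * (y k * w₀ j - y j * w₀ k) = 0 := by
      linear_combination w₀ j * h2' - y j * h1
    have htz : t = 0 := by
      rcases mul_eq_zero.mp ht with h | h
      · exact h
      · exact absurd (by linarith : y k * w₀ j = y j * w₀ k) hk
    subst htz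
    constructor
    · have : s * w₀ j = 0 := by linarith
      rcases mul_eq_zero.mp this with h | h
      · exact h
      · exact absurd h hj
    · rfl
  -- conclude
  have hmem : Submodule.span ℝ (Set.range ![cj, ck]) ≤
      LinearMap.range (X - Y).mulVecLin := by
    rw [Matrix.range_mulVecLin]
    apply Submodule.span_le.mpr
    rintro v ⟨i, rfl⟩
    fin_cases i
    · exact Submodule.subset_span ⟨j, rfl⟩
    · exact Submodule.subset_span ⟨k, rfl⟩
  have h2le : 2 ≤ (X - Y).rank := by
    rw [Matrix.rank]
    calc 2 = Module.finrank ℝ (Submodule.span ℝ (Set.range ![cj, ck])) := by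
            rw [finrank_span_eq_card hind]; simp
      _ ≤ Module.finrank ℝ (LinearMap.range (X - Y).mulVecLin) :=
            Submodule.finrank_mono hmem
  omega
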